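/- For any w ∈ W and any subset J of simple reflections, the set {y ∈ W_J : y ≤ w} (Bruhat order) has a unique maximal element m(w,J). -/

import Mathlib

variable {B : Type*} {W : Type*} [Group W] {M : CoxeterMatrix B}

/-- The standard parabolic subgroup `W_J` generated by the simple reflections in `J`. -/
def parabolicSubgroup (cs : CoxeterSystem M W) (J : Set B) : Subgroup W :=
  Subgroup.closure (cs.simple '' J)

/-- Minimal-length representatives of the cosets `W_J\W`. -/
noncomputable def minCosetReps (cs : CoxeterSystem M W) (J : Set B) : Set W :=
  {v | ∀ u ∈ parabolicSubgroup cs J, cs.length v ≤ cs.length (u * v)}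

/-- The Bruhat order on a Coxeter group. -/
def bruhatLE (cs : CoxeterSystem M W) : W → W → Prop :=
  Relation.ReflTransGen fun a b =>
    (∃ t, cs.IsReflection t ∧ b = t * a) ∧ cs.length a < cs.length b

section
open List CoxeterSystem
namespace BruhatAux

lemma conj_eq_iff {W : Type*} [Group W] {a : W} (ha : a * a = 1) (t u : W) :
    a * t * a = u ↔ t = a * u * a := by
  constructor
  · intro h
    rw [← h]
    have : a * (a * t * a) * a = (a * a) * t * (a * a) := by group
    rw [this, ha, one_mul, mul_one]
  · intro h
    rw [h]
    have : a * (a * u * a) * a = (a * a) * u * (a * a) := by group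
    rw [this, ha, one_mul, mul_one]

variable (cs : CoxeterSystem M W)

local prefix:100 "s" => cs.simple
local prefix:100 "π" => cs.wordProd
local prefix:100 "ℓ" => cs.length

open scoped Classical

/-- The sign-flip involution attached to a simple reflection. -/
noncomputable def sp (i : B) : Equiv.Perm (W × ℤˣ) :=
  Function.Involutive.toPerm
    (fun p => (s i * p.1 * s i, (if p.1 = s i then -1 else 1) * p.2))
    (by
      intro p
      obtain ⟨t, ε⟩ := p
      have ss : s i * s i = 1 := cs.simple_mul_simple_self i
      simp only [Prod.mk.injEq]
      have h1 : s i * (s i * t * s i) * s i = t := by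
        have : s i * (s i * t * s i) * s i = (s i * s i) * t * (s i * s i) := by group
        rw [this, ss, one_mul, mul_one]
      refine ⟨h1, ?_⟩
      have h2 : (s i * t * s i = s i) ↔ (t = s i) := by
        rw [conj_eq_iff ss, show s i * s i * s i = s i by rw [ss, one_mul]]
      by_cases ht : t = s i
      · simp [ht, h2, ss]
      · simp [ht, h2, ss])

lemma sp_apply (i : B) (t : W) (ε : ℤˣ) :
    sp cs i (t, ε) = (s i * t * s i, (if t = s i then -1 else 1) * ε) := rfl

lemma sp_liftable : M.IsLiftable (sp cs) := by
  intro i j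
  have ssi : s i * s i = 1 := cs.simple_mul_simple_self i
  have ssj : s j * s j = 1 := cs.simple_mul_simple_self j
  obtain ⟨p, hp⟩ : ∃ p : W, p = s i * s j := ⟨_, rfl⟩
  have hpm : p ^ M i j = 1 := by rw [hp]; exact cs.simple_mul_simple_pow i j
  have hsp : s j * p = p⁻¹ * s j := by
    rw [hp, mul_inv_rev, cs.inv_simple, cs.inv_simple, ← mul_assoc]
  have key : ∀ (k : ℕ) (t : W) (ε : ℤˣ),
      ((sp cs i * sp cs j) ^ k) (t, ε) =
        (p ^ k * t * (p ^ k)⁻¹,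
          (∏ a ∈ Finset.range (2 * k), (if p ^ a * t = s j then (-1 : ℤˣ) else 1)) * ε) := by
    intro k
    induction k with
    | zero => intro t ε; simp
    | succ k ih =>
      intro t ε
      rw [pow_succ, Equiv.Perm.mul_apply]
      have step : (sp cs i * sp cs j) (t, ε) =
          (p * t * p⁻¹,
            ((if p ^ 0 * t = s j then (-1:ℤˣ) else 1) * (if p ^ 1 * t = s j then (-1:ℤˣ) else 1)) * ε) := by
        show sp cs i (sp cs j (t, ε)) = _
        rw [sp_apply, sp_apply]
        simp only [Prod.mk.injEq]
        constructor
        · rw [hp, mul_inv_rev, cs.inv_simple, cs.inv_simple]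
          group
        · have c1 : (t = s j) ↔ (p ^ 0 * t = s j) := by rw [pow_zero, one_mul]
          have c2 : (s j * t * s j = s i) ↔ (p ^ 1 * t = s j) := by
            rw [conj_eq_iff ssj, pow_one, hp]
            constructor
            · intro h; rw [h]
              have : s i * s j * (s j * s i * s j) = s i * (s j * s j) * s i * s j := by group
              rw [this, ssj, mul_one, ssi, one_mul]
            · intro h
              have h' : t = (s i * s j)⁻¹ * (s i * s j * t) := (inv_mul_cancel_left _ _).symm
              rw [h] at h'
              rw [h', mul_inv_rev, cs.inv_simple, cs.inv_simple]
          rw [← c1, ← c2, ← mul_assoc,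
            mul_comm (if s j * t * s j = s i then (-1:ℤˣ) else 1) (if t = s j then (-1:ℤˣ) else 1)]
      rw [step, ih]
      simp only [Prod.mk.injEq]
      constructor
      · rw [pow_succ, mul_inv_rev]
        group
      · have reindex : ∀ a : ℕ, (if p ^ a * (p * t * p⁻¹) = s j then (-1:ℤˣ) else 1)
            = (if p ^ (2 + a) * t = s j then (-1:ℤˣ) else 1) := by
          intro a
          congr 1
          apply propext
          constructor
          · intro h
            have h1 : p ^ (a+1) * t = s j * p := by
              rw [← h]; rw [pow_succ]; group
            rw [hsp] at h1
            have h2 := congrArg (fun x => p * x) h1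
            calc p ^ (2+a) * t = p * (p ^ (a+1) * t) := by
                  rw [show 2 + a = (a+1)+1 by omega, pow_succ', mul_assoc]
            _ = p * (p⁻¹ * s j) := by rw [h1]
            _ = s j := by group
          · intro h
            have h1 : p ^ (a+1) * t = p⁻¹ * s j := by
              have : p ^ (a+1) * t = p⁻¹ * (p ^ (2+a) * t) := by
                rw [← mul_assoc]
                congr 1
                rw [show 2 + a = (a+1) + 1 by omega, pow_succ']
                group
              rw [this, h]
            rw [← hsp] at h1
            calc p ^ a * (p * t * p⁻¹) = (p ^ (a+1) * t) * p⁻¹ := by rw [pow_succ]; group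
            _ = s j * p * p⁻¹ := by rw [h1]
            _ = s j := by group
        calc (∏ a ∈ Finset.range (2 * k), if p ^ a * (p * t * p⁻¹) = s j then (-1:ℤˣ) else 1) *
              (((if p ^ 0 * t = s j then (-1:ℤˣ) else 1) * (if p ^ 1 * t = s j then (-1:ℤˣ) else 1)) * ε)
            = (∏ a ∈ Finset.range (2 * k), if p ^ (2 + a) * t = s j then (-1:ℤˣ) else 1) *
              (((if p ^ 0 * t = s j then (-1:ℤˣ) else 1) * (if p ^ 1 * t = s j then (-1:ℤˣ) else 1)) * ε) := by
              rw [Finset.prod_congr rfl (fun a _ => reindex a)]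
        _ = (∏ a ∈ Finset.range (2 * (k+1)), if p ^ a * t = s j then (-1:ℤˣ) else 1) * ε := by
              have : 2 * (k + 1) = 2 + 2 * k := by omega
              rw [this, Finset.prod_range_add]
              have h2 : (∏ a ∈ Finset.range 2, if p ^ a * t = s j then (-1:ℤˣ) else 1)
                  = (if p ^ 0 * t = s j then (-1:ℤˣ) else 1) * (if p ^ 1 * t = s j then (-1:ℤˣ) else 1) := by
                rw [Finset.prod_range_succ, Finset.prod_range_one]
              rw [h2]
              generalize (∏ a ∈ Finset.range (2*k), if p ^ (2 + a) * t = s j then (-1:ℤˣ) else 1) = A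
              generalize (if p ^ 0 * t = s j then (-1:ℤˣ) else 1) = F0
              generalize (if p ^ 1 * t = s j then (-1:ℤˣ) else 1) = F1
              simp only [mul_assoc]
              rw [mul_left_comm A F0, mul_left_comm A F1]
  apply Equiv.ext
  rintro ⟨t, ε⟩
  rw [key (M i j) t ε, hpm]
  have h3 : ∀ a : ℕ, (if p ^ (M i j + a) * t = s j then (-1:ℤˣ) else 1)
      = (if p ^ a * t = s j then (-1:ℤˣ) else 1) := by
    intro a
    congr 2
    rw [pow_add, hpm, one_mul]
  have h4 : (∏ a ∈ Finset.range (2 * M i j), if p ^ a * t = s j then (-1:ℤˣ) else 1) = 1 := by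
    have : 2 * M i j = M i j + M i j := by omega
    rw [this, Finset.prod_range_add,
      Finset.prod_congr rfl (fun a _ => h3 a), Int.units_mul_self]
  rw [h4]
  simp

/-- The sign representation `W →* Perm (W × ℤˣ)`. -/
noncomputable def rho : W →* Equiv.Perm (W × ℤˣ) := cs.lift ⟨sp cs, sp_liftable cs⟩

lemma rho_simple (i : B) : rho cs (s i) = sp cs i :=
  cs.lift_apply_simple (sp_liftable cs) i

/-- The sign of a reflection `t` relative to `w`. -/
noncomputable def nsign (w t : W) : ℤˣ := ((rho cs w) (t, 1)).2

lemma rho_apply_aux (ω : List B) (t : W) (ε : ℤˣ) :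
    rho cs (π ω) (t, ε) = (π ω * t * (π ω)⁻¹, ((rho cs (π ω)) (t, 1)).2 * ε) := by
  induction ω generalizing t ε with
  | nil => simp
  | cons i ω ih =>
    have expand : ∀ (ε' : ℤˣ), rho cs (π (i :: ω)) (t, ε') =
        (s i * (π ω * t * (π ω)⁻¹) * s i,
          (if π ω * t * (π ω)⁻¹ = s i then (-1 : ℤˣ) else 1) * (((rho cs (π ω)) (t, 1)).2 * ε')) := by
      intro ε'
      rw [cs.wordProd_cons, map_mul, Equiv.Perm.mul_apply, ih, rho_simple, sp_apply]
    rw [expand ε, expand 1]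
    simp only [Prod.mk.injEq]
    constructor
    · rw [cs.wordProd_cons, mul_inv_rev, cs.inv_simple]
      group
    · rw [mul_one]
      exact (mul_assoc _ _ _).symm

lemma rho_apply (w t : W) (ε : ℤˣ) :
    rho cs w (t, ε) = (w * t * w⁻¹, nsign cs w t * ε) := by
  obtain ⟨ω, rfl⟩ := cs.wordProd_surjective w
  exact rho_apply_aux cs ω t ε

lemma nsign_wordProd (ω : List B) (t : W) :
    nsign cs (π ω) t = (-1 : ℤˣ) ^ (List.count t (cs.rightInvSeq ω)) := by
  induction ω with
  | nil => simp [nsign]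
  | cons i ω ih =>
    have hris : cs.rightInvSeq (i :: ω) = ((π ω)⁻¹ * (s i) * (π ω)) :: cs.rightInvSeq ω := rfl
    rw [hris, List.count_cons]
    have hstep : nsign cs (π (i :: ω)) t
        = (if π ω * t * (π ω)⁻¹ = s i then (-1 : ℤˣ) else 1) * nsign cs (π ω) t := by
      show ((rho cs (π (i :: ω))) (t, 1)).2 = _
      rw [cs.wordProd_cons, map_mul, Equiv.Perm.mul_apply,
        show (((rho cs) (π ω)) (t, 1)) = (π ω * t * (π ω)⁻¹, nsign cs (π ω) t) from by
          rw [rho_apply, mul_one],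
        rho_simple, sp_apply]
    rw [hstep, ih]
    have hcond : (π ω * t * (π ω)⁻¹ = s i) ↔ ((π ω)⁻¹ * (s i) * (π ω) == t) = true := by
      rw [beq_iff_eq]
      constructor
      · intro h; rw [← h]; group
      · intro h; rw [← h]; group
    by_cases hc : π ω * t * (π ω)⁻¹ = s i
    · rw [if_pos hc, if_pos (hcond.mp hc), pow_succ]
      rw [mul_comm]
    · rw [if_neg hc, if_neg (fun hh => hc (hcond.mpr hh)), one_mul, Nat.add_zero]

lemma nsign_refl_self {t : W} (ht : cs.IsReflection t) : nsign cs t t = -1 := by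
  obtain ⟨u, i, rfl⟩ := ht
  have h1 : rho cs u⁻¹ (u * s i * u⁻¹, 1) = (s i, nsign cs u⁻¹ (u * s i * u⁻¹)) := by
    rw [rho_apply, mul_one]
    congr 1
    group
  have h2 : rho cs u (s i, nsign cs u⁻¹ (u * s i * u⁻¹)) = (u * s i * u⁻¹, 1) := by
    rw [← h1, ← Equiv.Perm.mul_apply, ← map_mul, mul_inv_cancel, map_one, Equiv.Perm.one_apply]
  have h3 : nsign cs u (s i) * nsign cs u⁻¹ (u * s i * u⁻¹) = 1 := by
    have h2' := h2
    rw [rho_apply] at h2'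
    exact congrArg Prod.snd h2'
  show ((rho cs (u * s i * u⁻¹)) (u * s i * u⁻¹, 1)).2 = -1
  rw [map_mul, map_mul, Equiv.Perm.mul_apply, Equiv.Perm.mul_apply, h1, rho_simple, sp_apply,
    if_pos rfl]
  have h5 : s i * s i * s i = s i := by
    rw [cs.simple_mul_simple_self, one_mul]
  rw [h5, rho_apply]
  show nsign cs u (s i) * (-1 * nsign cs u⁻¹ (u * s i * u⁻¹)) = -1
  rw [neg_one_mul, mul_neg, h3]

lemma nsign_mul_refl (w : W) {t : W} (ht : cs.IsReflection t) :
    nsign cs w t = - nsign cs (w * t) t := by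
  have h1 : rho cs t (t, 1) = (t, -1) := by
    rw [rho_apply, nsign_refl_self cs ht, mul_one]
    congr 1
    rw [ht.mul_self, one_mul, ht.inv]
  have key : rho cs w (t, 1) = rho cs (w * t) (rho cs t (t, 1)) := by
    rw [← Equiv.Perm.mul_apply, ← map_mul, mul_assoc, ht.mul_self, mul_one]
  rw [h1, rho_apply, rho_apply] at key
  have := congrArg Prod.snd key
  simp only [mul_one] at this
  rw [nsign, rho_apply, mul_one]
  rw [this, mul_neg_one]

lemma mem_rightInvSeq_iff {ω : List B} (hr : cs.IsReduced ω) (t : W) :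
    t ∈ cs.rightInvSeq ω ↔ nsign cs (π ω) t = -1 := by
  rw [nsign_wordProd]
  have hnd : (cs.rightInvSeq ω).Nodup := CoxeterSystem.IsReduced.nodup_rightInvSeq cs hr
  have hle : (cs.rightInvSeq ω).count t ≤ 1 := List.nodup_iff_count_le_one.mp hnd t
  constructor
  · intro h
    have : (cs.rightInvSeq ω).count t = 1 :=
      le_antisymm hle (List.count_pos_iff.mpr h)
    rw [this, pow_one]
  · intro h
    by_contra hmem
    have : (cs.rightInvSeq ω).count t = 0 := by
      rcases Nat.eq_or_lt_of_le hle with h1 | h1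
      · exfalso; exact hmem (List.count_pos_iff.mp (by omega))
      · omega
    rw [this, pow_zero] at h
    exact absurd h (by decide)

/-- Strong exchange property, right-handed version. -/
theorem strong_exchange_right {ω : List B} (hr : cs.IsReduced ω) {t : W}
    (ht : cs.IsReflection t) (hl : ℓ (π ω * t) < ℓ (π ω)) : t ∈ cs.rightInvSeq ω := by
  rw [mem_rightInvSeq_iff cs hr]
  rcases Int.units_eq_one_or (nsign cs (π ω) t) with h | h
  · exfalso
    have h2 : nsign cs (π ω * t) t = -1 := by
      have h0 := nsign_mul_refl cs (π ω) ht
      rw [h] at h0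
      have h0' : (-1 : ℤˣ) = nsign cs (π ω * t) t := by
        simpa using congrArg Neg.neg h0
      exact h0'.symm
    obtain ⟨ω', hω', hw'⟩ := cs.exists_reduced_word' (π ω * t)
    rw [hw'] at h2
    have h3 : t ∈ cs.rightInvSeq ω' := (mem_rightInvSeq_iff cs hω' t).mpr h2
    have h4 := cs.isRightInversion_of_mem_rightInvSeq hω' h3
    have h5 : ℓ (π ω' * t) < ℓ (π ω') := h4.2
    rw [← hw', mul_assoc, ht.mul_self, mul_one] at h5
    omega
  · exact h

/-- Right exchange: deletion form. -/
theorem exch_right {ω : List B} (hr : cs.IsReduced ω) {t : W}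
    (ht : cs.IsReflection t) (hl : ℓ (π ω * t) < ℓ (π ω)) :
    ∃ j < ω.length, π (ω.eraseIdx j) = π ω * t := by
  have hmem := strong_exchange_right cs hr ht hl
  obtain ⟨j, hj, hgd⟩ := List.mem_iff_getElem.mp hmem
  rw [cs.length_rightInvSeq] at hj
  refine ⟨j, hj, ?_⟩
  rw [← cs.wordProd_mul_getD_rightInvSeq ω j]
  congr 1
  rw [List.getD_eq_getElem _ 1 (by rw [cs.length_rightInvSeq]; exact hj)]
  exact hgd

/-- Left exchange: deletion form. -/
theorem exch_left {ω : List B} (hr : cs.IsReduced ω) {t : W}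
    (ht : cs.IsReflection t) (hl : ℓ (t * π ω) < ℓ (π ω)) :
    ∃ j < ω.length, π (ω.eraseIdx j) = t * π ω := by
  have hrev : cs.IsReduced ω.reverse := (cs.isReduced_reverse_iff ω).mpr hr
  have hl' : ℓ (π ω.reverse * t) < ℓ (π ω.reverse) := by
    rw [cs.wordProd_reverse]
    have e1 : (π ω)⁻¹ * t = (t * π ω)⁻¹ := by rw [mul_inv_rev, ht.inv]
    rw [e1, cs.length_inv, cs.length_inv]
    exact hl
  have hmem := strong_exchange_right cs hrev ht hl'
  rw [cs.rightInvSeq_reverse] at hmem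
  rw [List.mem_reverse] at hmem
  obtain ⟨j, hj, hgd⟩ := List.mem_iff_getElem.mp hmem
  rw [cs.length_leftInvSeq] at hj
  refine ⟨j, hj, ?_⟩
  rw [← cs.getD_leftInvSeq_mul_wordProd ω j]
  congr 1
  rw [List.getD_eq_getElem _ 1 (by rw [cs.length_leftInvSeq]; exact hj)]
  exact hgd

/-- Any word contains a reduced sublist with the same product. -/
theorem reduce_word (ω : List B) :
    ∃ σ, σ <+ ω ∧ cs.IsReduced σ ∧ π σ = π ω := by
  induction ω using List.reverseRecOn with
  | nil => exact ⟨[], List.Sublist.refl _, by simp [CoxeterSystem.IsReduced], rfl⟩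
  | append_singleton ω i ih =>
    obtain ⟨σ, hsub, hred, hprod⟩ := ih
    rcases cs.length_mul_simple (π σ) i with hc | hc
    · refine ⟨σ ++ [i], List.Sublist.append hsub (List.Sublist.refl _), ?_, ?_⟩
      · show ℓ (π (σ ++ [i])) = (σ ++ [i]).length
        rw [cs.wordProd_append, cs.wordProd_singleton, hc, hred]
        simp
      · rw [cs.wordProd_append, cs.wordProd_append, hprod]
    · have hl : ℓ (π σ * s i) < ℓ (π σ) := by omega
      obtain ⟨j, hj, hje⟩ := exch_right cs hred (cs.isReflection_simple i) hl
      refine ⟨σ.eraseIdx j, ?_, ?_, ?_⟩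
      · exact ((σ.eraseIdx_sublist j).trans hsub).trans (List.sublist_append_left ω [i])
      · show ℓ (π (σ.eraseIdx j)) = (σ.eraseIdx j).length
        have hlen : (σ.eraseIdx j).length + 1 = σ.length := List.length_eraseIdx_add_one hj
        rw [hje]
        have : ℓ (π σ) = σ.length := hred
        omega
      · rw [hje, cs.wordProd_append, cs.wordProd_singleton, hprod]

/-- Elements of the parabolic subgroup are products of `J`-words. -/
theorem wordProd_mem_parabolic {J : Set B} {ω : List B} (hω : ∀ b ∈ ω, b ∈ J) :
    π ω ∈ parabolicSubgroup cs J := by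
  induction ω with
  | nil => simp [one_mem]
  | cons i ω ih =>
    rw [cs.wordProd_cons]
    exact mul_mem (Subgroup.subset_closure ⟨i, hω i (by simp), rfl⟩)
      (ih (fun b hb => hω b (by simp [hb])))

theorem mem_parabolic_iff_jword {J : Set B} (w : W) :
    w ∈ parabolicSubgroup cs J ↔ ∃ ω, (∀ b ∈ ω, b ∈ J) ∧ w = π ω := by
  constructor
  · intro hw
    induction hw using Subgroup.closure_induction with
    | mem g hg =>
      obtain ⟨i, hi, rfl⟩ := hg
      exact ⟨[i], by simpa using hi, (cs.wordProd_singleton i).symm⟩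
    | one => exact ⟨[], by simp, by simp⟩
    | mul a b _ _ iha ihb =>
      obtain ⟨ωa, ha, rfl⟩ := iha
      obtain ⟨ωb, hb, rfl⟩ := ihb
      exact ⟨ωa ++ ωb, fun x hx => by
        rcases List.mem_append.mp hx with h | h
        exacts [ha x h, hb x h], (cs.wordProd_append ωa ωb).symm⟩
    | inv a _ iha =>
      obtain ⟨ωa, ha, rfl⟩ := iha
      exact ⟨ωa.reverse, fun x hx => ha x (List.mem_reverse.mp hx),
        (cs.wordProd_reverse ωa).symm⟩
  · rintro ⟨ω, hω, rfl⟩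
    exact wordProd_mem_parabolic cs hω

theorem exists_reduced_jword {J : Set B} {w : W} (hw : w ∈ parabolicSubgroup cs J) :
    ∃ ω, (∀ b ∈ ω, b ∈ J) ∧ cs.IsReduced ω ∧ w = π ω := by
  obtain ⟨ω, hω, rfl⟩ := (mem_parabolic_iff_jword cs w).mp hw
  obtain ⟨σ, hsub, hred, hprod⟩ := reduce_word cs ω
  exact ⟨σ, fun b hb => hω b (hsub.subset hb), hred, hprod.symm⟩

/-- If `i` is a left descent of `y ∈ W_J`, then `s i ∈ W_J`. -/
theorem simple_mem_parabolic_of_descent {J : Set B} {y : W} (hy : y ∈ parabolicSubgroup cs J)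
    {i : B} (hd : ℓ (s i * y) < ℓ y) : s i ∈ parabolicSubgroup cs J := by
  obtain ⟨ω, hJ, hred, rfl⟩ := exists_reduced_jword cs hy
  obtain ⟨j, hj, hje⟩ := exch_left cs hred (cs.isReflection_simple i) hd
  have h1 : π (ω.eraseIdx j) ∈ parabolicSubgroup cs J :=
    wordProd_mem_parabolic cs (fun b hb => hJ b ((ω.eraseIdx_sublist j).subset hb))
  have h2 : s i = π (ω.eraseIdx j) * (π ω)⁻¹ := by
    rw [hje]
    group
  rw [h2]
  exact mul_mem h1 (inv_mem (wordProd_mem_parabolic cs hJ))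

/-! ### Bruhat order basics -/

theorem bruhat_step {t a : W} (ht : cs.IsReflection t) (hl : ℓ a < ℓ (t * a)) :
    bruhatLE cs a (t * a) :=
  Relation.ReflTransGen.single ⟨⟨t, ht, rfl⟩, hl⟩

theorem bruhat_trans {a b c : W} (h1 : bruhatLE cs a b) (h2 : bruhatLE cs b c) :
    bruhatLE cs a c := Relation.ReflTransGen.trans h1 h2

theorem bruhat_refl (a : W) : bruhatLE cs a a := Relation.ReflTransGen.refl

theorem bruhat_length_le {a b : W} (h : bruhatLE cs a b) : ℓ a ≤ ℓ b := by
  induction h with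
  | refl => exact le_refl _
  | tail _ hstep ih => exact le_of_lt (lt_of_le_of_lt ih hstep.2)

theorem bruhat_eq_of_length_ge {a b : W} (h : bruhatLE cs a b) (hl : ℓ b ≤ ℓ a) : a = b := by
  rcases Relation.ReflTransGen.cases_tail h with h1 | ⟨c, hac, hstep⟩
  · exact h1.symm
  · exfalso
    have := bruhat_length_le cs hac
    have := hstep.2
    omega

theorem bruhat_antisymm {a b : W} (h1 : bruhatLE cs a b) (h2 : bruhatLE cs b a) : a = b :=
  bruhat_eq_of_length_ge cs h1 (bruhat_length_le cs h2)

theorem bruhat_one_le (w : W) : bruhatLE cs 1 w := by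
  generalize hn : ℓ w = n
  induction n using Nat.strong_induction_on generalizing w with
  | _ n ih =>
    by_cases hw : w = 1
    · rw [hw]; exact bruhat_refl cs 1
    · obtain ⟨i, hi⟩ := cs.exists_leftDescent_of_ne_one hw
      have hlt : ℓ (s i * w) < ℓ w := hi
      have h1 : bruhatLE cs 1 (s i * w) := ih (ℓ (s i * w)) (by omega) _ rfl
      have h2 : bruhatLE cs (s i * w) w := by
        have hw' : w = s i * (s i * w) := by
          rw [← mul_assoc, cs.simple_mul_simple_self, one_mul]
        have hstep := bruhat_step cs (cs.isReflection_simple i) (a := s i * w)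
          (by rw [← hw']; exact hlt)
        rw [← hw'] at hstep
        exact hstep
      exact bruhat_trans cs h1 h2

/-- Subword property: if `v ≤ w` then every reduced word for `w` contains a reduced
word for `v` as a sublist. -/
theorem exists_reduced_sublist_of_le {v w : W} (hvw : bruhatLE cs v w) :
    ∀ ω, cs.IsReduced ω → π ω = w → ∃ σ, σ <+ ω ∧ cs.IsReduced σ ∧ π σ = v := by
  generalize hn : ℓ w = n
  induction n using Nat.strong_induction_on generalizing v w with
  | _ n ih =>
    intro ω hred hprod
    rcases Relation.ReflTransGen.cases_tail hvw with h1 | ⟨u, hvu, hstep⟩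
    · exact ⟨ω, List.Sublist.refl _, hred, by rw [hprod, h1]⟩
    · obtain ⟨⟨t, ht, hw⟩, hlen⟩ := hstep
      have hu : u = t * w := by
        rw [hw, ← mul_assoc, ht.mul_self, one_mul]
      have hl : ℓ (t * π ω) < ℓ (π ω) := by
        rw [hprod, ← hu]
        exact hlen
      obtain ⟨j, hj, hje⟩ := exch_left cs hred ht hl
      obtain ⟨σu, hsubu, hredu, hprodu⟩ := reduce_word cs (ω.eraseIdx j)
      have hπσu : π σu = u := by rw [hprodu, hje, hprod, ← hu]
      have hlu : ℓ u < n := by rw [← hn]; exact hlen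
      obtain ⟨σ, hsubσ, hredσ, hprodσ⟩ := ih (ℓ u) hlu hvu rfl σu hredu hπσu
      exact ⟨σ, hsubσ.trans (hsubu.trans (ω.eraseIdx_sublist j)), hredσ, hprodσ⟩

/-- Auxiliary facts about lengths when multiplying by a simple reflection. -/
lemma length_simple_mul_of_lt {w : W} {i : B} (h : ℓ (s i * w) < ℓ w) :
    ℓ (s i * w) + 1 = ℓ w := by
  rcases cs.length_simple_mul w i with h1 | h1 <;> omega

lemma length_simple_mul_of_gt {w : W} {i : B} (h : ℓ w < ℓ (s i * w)) :
    ℓ (s i * w) = ℓ w + 1 := by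
  rcases cs.length_simple_mul w i with h1 | h1 <;> omega

lemma simple_mul_cancel (i : B) (w : W) : s i * (s i * w) = w := by
  rw [← mul_assoc, cs.simple_mul_simple_self, one_mul]

/-- The big three lemmas, by joint strong induction:
CSW (reduced sublists give Bruhat comparison), property N, and the lifting property M. -/
theorem liftpack (n : ℕ) :
    (∀ ω σ, cs.IsReduced ω → cs.IsReduced σ → σ <+ ω → ω.length ≤ n →
      bruhatLE cs (π σ) (π ω))
    ∧ (∀ (i : B) (x z : W), ℓ x < ℓ (s i * x) → ℓ (s i * z) < ℓ z →
        bruhatLE cs x z → ℓ z ≤ n → bruhatLE cs (s i * x) z)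
    ∧ (∀ (i : B) (v w : W), ℓ v < ℓ (s i * v) → ℓ w < ℓ (s i * w) →
        bruhatLE cs v w → ℓ w ≤ n → bruhatLE cs (s i * v) (s i * w)) := by
  induction n using Nat.strong_induction_on with
  | _ n ih =>
  have csw : ∀ ω σ, cs.IsReduced ω → cs.IsReduced σ → σ <+ ω → ω.length ≤ n →
      bruhatLE cs (π σ) (π ω) := by
    intro ω σ hrω hrσ hsub hlen
    match ω, hsub with
    | [], hsub =>
      have : σ = [] := List.sublist_nil.mp hsub
      rw [this]
      exact bruhat_refl cs _
    | i :: ω', hsub =>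
      have hn1 : 1 ≤ n := by
        have := (List.length_cons (a := i) (as := ω')) ▸ hlen
        omega
      have hrω' : cs.IsReduced ω' := by
        have := CoxeterSystem.IsReduced.drop (ω := i :: ω') hrω (j := 1)
        simpa using this
      have hlω' : ω'.length ≤ n - 1 := by
        have := (List.length_cons (a := i) (as := ω')) ▸ hlen
        omega
      have hstep : bruhatLE cs (π ω') (π (i :: ω')) := by
        rw [cs.wordProd_cons]
        refine bruhat_step cs (cs.isReflection_simple i) ?_
        have e1 : ℓ (π (i :: ω')) = ω'.length + 1 := by
          have : ℓ (π (i :: ω')) = (i :: ω').length := hrω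
          simpa using this
        have e2 : ℓ (π ω') = ω'.length := hrω'
        rw [cs.wordProd_cons] at e1
        omega
      rcases List.sublist_cons_iff.mp hsub with h | ⟨r, rfl, hr⟩
      · have hv := (ih (n - 1) (by omega)).1 ω' σ hrω' hrσ h hlω'
        exact bruhat_trans cs hv hstep
      · have hrr : cs.IsReduced r := by
          have := CoxeterSystem.IsReduced.drop (ω := i :: r) hrσ (j := 1)
          simpa using this
        have hvw : bruhatLE cs (π r) (π ω') :=
          (ih (n - 1) (by omega)).1 ω' r hrω' hrr hr hlω'
        have h1 : ℓ (π r) < ℓ (s i * π r) := by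
          have e1 : ℓ (π (i :: r)) = r.length + 1 := by
            have : ℓ (π (i :: r)) = (i :: r).length := hrσ
            simpa using this
          have e2 : ℓ (π r) = r.length := hrr
          rw [cs.wordProd_cons] at e1
          omega
        have h2 : ℓ (π ω') < ℓ (s i * π ω') := by
          have e1 : ℓ (π (i :: ω')) = ω'.length + 1 := by
            have : ℓ (π (i :: ω')) = (i :: ω').length := hrω
            simpa using this
          have e2 : ℓ (π ω') = ω'.length := hrω'
          rw [cs.wordProd_cons] at e1
          omega
        have := (ih (n - 1) (by omega)).2.2 i (π r) (π ω') h1 h2 hvw (by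
          have e2 : ℓ (π ω') = ω'.length := hrω'
          omega)
        rw [cs.wordProd_cons, cs.wordProd_cons]
        exact this
  have lemN : ∀ (i : B) (x z : W), ℓ x < ℓ (s i * x) → ℓ (s i * z) < ℓ z →
      bruhatLE cs x z → ℓ z ≤ n → bruhatLE cs (s i * x) z := by
    intro i x z h1 h2 hxz hn
    obtain ⟨ρ, hρred, hρ⟩ := cs.exists_reduced_word' (s i * z)
    have hπiρ : π (i :: ρ) = z := by
      rw [cs.wordProd_cons, ← hρ, simple_mul_cancel]
    have hziρ : cs.IsReduced (i :: ρ) := by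
      show ℓ (π (i :: ρ)) = (i :: ρ).length
      rw [hπiρ]
      have e1 : ℓ (s i * z) = ρ.length := by rw [hρ]; exact hρred
      have e2 := length_simple_mul_of_lt cs h2
      simp
      omega
    obtain ⟨σ, hsub, hσred, hσ⟩ := exists_reduced_sublist_of_le cs hxz (i :: ρ) hziρ hπiρ
    rcases List.sublist_cons_iff.mp hsub with h | ⟨r, rfl, hr⟩
    · have hred_iσ : cs.IsReduced (i :: σ) := by
        show ℓ (π (i :: σ)) = (i :: σ).length
        rw [cs.wordProd_cons, hσ]
        have e1 := length_simple_mul_of_gt cs h1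
        have e2 : ℓ x = σ.length := by rw [← hσ]; exact hσred
        simp
        omega
      have := csw (i :: ρ) (i :: σ) hziρ hred_iσ (List.cons_sublist_cons.mpr h) (by
        have : (i :: ρ).length = ρ.length + 1 := rfl
        have e1 : ℓ (s i * z) = ρ.length := by rw [hρ]; exact hρred
        have e2 := length_simple_mul_of_lt cs h2
        omega)
      rw [cs.wordProd_cons, hσ, hπiρ] at this
      exact this
    · exfalso
      have hrr : cs.IsReduced r := by
        have := CoxeterSystem.IsReduced.drop (ω := i :: r) hσred (j := 1)
        simpa using this
      have e1 : x = s i * π r := by rw [← hσ, cs.wordProd_cons]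
      have e2 : s i * x = π r := by rw [e1, simple_mul_cancel]
      have e3 : ℓ (π (i :: r)) = r.length + 1 := by
        have : ℓ (π (i :: r)) = (i :: r).length := hσred
        simpa using this
      have e4 : ℓ (π r) = r.length := hrr
      rw [cs.wordProd_cons, ← e1] at e3
      rw [e2] at h1
      omega
  have lemM : ∀ (i : B) (v w : W), ℓ v < ℓ (s i * v) → ℓ w < ℓ (s i * w) →
      bruhatLE cs v w → ℓ w ≤ n → bruhatLE cs (s i * v) (s i * w) := by
    intro i v w h1 h2 hvw hn
    rcases Relation.ReflTransGen.cases_tail hvw with heq | ⟨u, hvu, hstep⟩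
    · rw [heq]
      exact bruhat_refl cs _
    · obtain ⟨⟨t, ht, hw⟩, hlen⟩ := hstep
      by_cases hsu : ℓ u < ℓ (s i * u)
      · have h5 := (ih (n - 1) (by omega)).2.2 i v u h1 hsu hvu (by omega)
        have hconj : cs.IsReflection (s i * t * (s i)⁻¹) := ht.conj (s i)
        rw [cs.inv_simple] at hconj
        have heq2 : s i * w = (s i * t * s i) * (s i * u) := by
          rw [hw]
          have : s i * t * s i * (s i * u) = s i * t * (s i * s i) * u := by group
          rw [this, cs.simple_mul_simple_self, mul_one, mul_assoc]
        have hlt2 : ℓ (s i * u) < ℓ ((s i * t * s i) * (s i * u)) := by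
          rw [← heq2]
          have e1 := length_simple_mul_of_gt cs hsu
          have e2 := length_simple_mul_of_gt cs h2
          omega
        have hstep2 := bruhat_step cs hconj hlt2
        rw [← heq2] at hstep2
        exact bruhat_trans cs h5 hstep2
      · have hsu' : ℓ (s i * u) < ℓ u := by
          have := cs.length_simple_mul_ne u i
          omega
        have h6 := (ih (n - 1) (by omega)).2.1 i v u h1 hsu' hvu (by omega)
        have h7 : bruhatLE cs u w := by
          have := bruhat_step cs ht (a := u) (by rw [← hw]; exact hlen)
          rw [← hw] at this
          exact this
        have h8 : bruhatLE cs w (s i * w) :=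
          bruhat_step cs (cs.isReflection_simple i) h2
        exact bruhat_trans cs h6 (bruhat_trans cs h7 h8)
  exact ⟨csw, lemN, lemM⟩

/-- Reduced sublists give Bruhat comparison. -/
theorem le_of_reduced_sublist {ω σ : List B} (hrω : cs.IsReduced ω) (hrσ : cs.IsReduced σ)
    (hsub : σ <+ ω) : bruhatLE cs (π σ) (π ω) :=
  (liftpack cs ω.length).1 ω σ hrω hrσ hsub le_rfl

theorem lemN' {i : B} {x z : W} (h1 : ℓ x < ℓ (s i * x)) (h2 : ℓ (s i * z) < ℓ z)
    (hxz : bruhatLE cs x z) : bruhatLE cs (s i * x) z :=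
  (liftpack cs (ℓ z)).2.1 i x z h1 h2 hxz le_rfl

theorem lemM' {i : B} {v w : W} (h1 : ℓ v < ℓ (s i * v)) (h2 : ℓ w < ℓ (s i * w))
    (hvw : bruhatLE cs v w) : bruhatLE cs (s i * v) (s i * w) :=
  (liftpack cs (ℓ w)).2.2 i v w h1 h2 hvw le_rfl

/-- Lifting: descents on both sides. -/
theorem desc_desc {i : B} {y w : W} (hw : ℓ (s i * w) < ℓ w) (hy : ℓ (s i * y) < ℓ y)
    (hyw : bruhatLE cs y w) : bruhatLE cs (s i * y) (s i * w) := by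
  obtain ⟨ρ, hρred, hρ⟩ := cs.exists_reduced_word' (s i * w)
  have hπiρ : π (i :: ρ) = w := by
    rw [cs.wordProd_cons, ← hρ, simple_mul_cancel]
  have hziρ : cs.IsReduced (i :: ρ) := by
    show ℓ (π (i :: ρ)) = (i :: ρ).length
    rw [hπiρ]
    have e1 : ℓ (s i * w) = ρ.length := by rw [hρ]; exact hρred
    have e2 := length_simple_mul_of_lt cs hw
    simp
    omega
  obtain ⟨σ, hsub, hσred, hσ⟩ := exists_reduced_sublist_of_le cs hyw (i :: ρ) hziρ hπiρ
  rcases List.sublist_cons_iff.mp hsub with h | ⟨r, rfl, hr⟩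
  · -- y ≤ s i * w, and s i * y ≤ y
    have h5 : bruhatLE cs (π σ) (π ρ) := le_of_reduced_sublist cs hρred hσred h
    rw [hσ, ← hρ] at h5
    have h6 : bruhatLE cs (s i * y) y := by
      have := bruhat_step cs (cs.isReflection_simple i) (a := s i * y) (by
        rw [simple_mul_cancel]
        exact hy)
      rw [simple_mul_cancel] at this
      exact this
    exact bruhat_trans cs h6 h5
  · have hrr : cs.IsReduced r := by
      have := CoxeterSystem.IsReduced.drop (ω := i :: r) hσred (j := 1)
      simpa using this
    have e2 : s i * y = π r := by rw [← hσ, cs.wordProd_cons, simple_mul_cancel]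
    have h5 : bruhatLE cs (π r) (π ρ) := le_of_reduced_sublist cs hρred hrr hr
    rw [← e2, ← hρ] at h5
    exact h5

/-- Lifting: ascent below, descent above. -/
theorem asc_desc {i : B} {y w : W} (hw : ℓ (s i * w) < ℓ w) (hy : ℓ y < ℓ (s i * y))
    (hyw : bruhatLE cs y w) : bruhatLE cs y (s i * w) := by
  obtain ⟨ρ, hρred, hρ⟩ := cs.exists_reduced_word' (s i * w)
  have hπiρ : π (i :: ρ) = w := by
    rw [cs.wordProd_cons, ← hρ, simple_mul_cancel]
  have hziρ : cs.IsReduced (i :: ρ) := by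
    show ℓ (π (i :: ρ)) = (i :: ρ).length
    rw [hπiρ]
    have e1 : ℓ (s i * w) = ρ.length := by rw [hρ]; exact hρred
    have e2 := length_simple_mul_of_lt cs hw
    simp
    omega
  obtain ⟨σ, hsub, hσred, hσ⟩ := exists_reduced_sublist_of_le cs hyw (i :: ρ) hziρ hπiρ
  rcases List.sublist_cons_iff.mp hsub with h | ⟨r, rfl, hr⟩
  · have h5 : bruhatLE cs (π σ) (π ρ) := le_of_reduced_sublist cs hρred hσred h
    rw [hσ, ← hρ] at h5
    exact h5
  · exfalso
    have hrr : cs.IsReduced r := by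
      have := CoxeterSystem.IsReduced.drop (ω := i :: r) hσred (j := 1)
      simpa using this
    have e1 : y = s i * π r := by rw [← hσ, cs.wordProd_cons]
    have e2 : s i * y = π r := by rw [e1, simple_mul_cancel]
    have e3 : ℓ (π (i :: r)) = r.length + 1 := by
      have : ℓ (π (i :: r)) = (i :: r).length := hσred
      simpa using this
    have e4 : ℓ (π r) = r.length := hrr
    rw [cs.wordProd_cons, ← e1] at e3
    rw [e2] at hy
    omega

/-- If `s i * w < w` then `y ≤ w` implies `s i * y ≤ w`. -/
theorem mul_le_of_le {i : B} {y w : W} (hw : ℓ (s i * w) < ℓ w) (hyw : bruhatLE cs y w) :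
    bruhatLE cs (s i * y) w := by
  by_cases hy : ℓ (s i * y) < ℓ y
  · have h6 : bruhatLE cs (s i * y) y := by
      have := bruhat_step cs (cs.isReflection_simple i) (a := s i * y) (by
        rw [simple_mul_cancel]; exact hy)
      rw [simple_mul_cancel] at this
      exact this
    exact bruhat_trans cs h6 hyw
  · have hy' : ℓ y < ℓ (s i * y) := by
      have := cs.length_simple_mul_ne y i
      omega
    exact lemN' cs hy' hw hyw

theorem le_of_mul_le {i : B} {y w : W} (hw : ℓ (s i * w) < ℓ w) (hyw : bruhatLE cs (s i * y) w) :
    bruhatLE cs y w := by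
  have := mul_le_of_le cs hw hyw
  rw [simple_mul_cancel] at this
  exact this

/-- Existence of the maximum of `{y ∈ W_J : y ≤ w}`. -/
theorem exists_max (J : Set B) (w : W) :
    ∃ m : W, (m ∈ parabolicSubgroup cs J ∧ bruhatLE cs m w) ∧
      ∀ y ∈ parabolicSubgroup cs J, bruhatLE cs y w → bruhatLE cs y m := by
  generalize hn : ℓ w = n
  induction n using Nat.strong_induction_on generalizing w with
  | _ n ih =>
  by_cases hw1 : w = 1
  · refine ⟨1, ⟨one_mem _, by rw [hw1]; exact bruhat_refl cs 1⟩, ?_⟩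
    intro y _ hyw
    rw [hw1] at hyw
    have h1 : ℓ y ≤ ℓ (1 : W) := bruhat_length_le cs hyw
    rw [cs.length_one] at h1
    have : y = 1 := cs.length_eq_zero_iff.mp (by omega)
    rw [this]
    exact bruhat_refl cs 1
  · obtain ⟨i, hi⟩ := cs.exists_leftDescent_of_ne_one hw1
    have hlt : ℓ (s i * w) < ℓ w := hi
    obtain ⟨m', ⟨hm'mem, hm'le⟩, hm'max⟩ := ih (ℓ (s i * w)) (by omega) (s i * w) rfl
    have hww' : w = s i * (s i * w) := (simple_mul_cancel cs i w).symm
    have hw'w : bruhatLE cs (s i * w) w := by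
      have := bruhat_step cs (cs.isReflection_simple i) (a := s i * w)
        (by rw [simple_mul_cancel]; exact hlt)
      rw [simple_mul_cancel] at this
      exact this
    by_cases hs : s i ∈ parabolicSubgroup cs J
    · by_cases hm : ℓ m' < ℓ (s i * m')
      · -- the maximum is s i * m'
        refine ⟨s i * m', ⟨mul_mem hs hm'mem, ?_⟩, ?_⟩
        · have hgw : ℓ (s i * w) < ℓ (s i * (s i * w)) := by
            rw [simple_mul_cancel]
            exact hlt
          have := lemM' cs hm hgw hm'le
          rw [simple_mul_cancel] at this
          exact this
        · intro y hy hyw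
          by_cases hdy : ℓ (s i * y) < ℓ y
          · have h6 : bruhatLE cs (s i * y) (s i * w) := desc_desc cs hlt hdy hyw
            have h7 : s i * y ∈ parabolicSubgroup cs J := mul_mem hs hy
            have h8 : bruhatLE cs (s i * y) m' := hm'max (s i * y) h7 h6
            have h9 : ℓ (s i * y) < ℓ (s i * (s i * y)) := by
              rw [simple_mul_cancel]
              exact hdy
            have := lemM' cs h9 hm h8
            rw [simple_mul_cancel] at this
            exact this
          · have hay : ℓ y < ℓ (s i * y) := by
              have := cs.length_simple_mul_ne y i
              omega
            have h6 : bruhatLE cs y (s i * w) := asc_desc cs hlt hay hyw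
            have h7 : bruhatLE cs y m' := hm'max y hy h6
            have h8 : bruhatLE cs m' (s i * m') :=
              bruhat_step cs (cs.isReflection_simple i) hm
            exact bruhat_trans cs h7 h8
      · -- the maximum is m'
        have hm2 : ℓ (s i * m') < ℓ m' := by
          have := cs.length_simple_mul_ne m' i
          omega
        refine ⟨m', ⟨hm'mem, bruhat_trans cs hm'le hw'w⟩, ?_⟩
        intro y hy hyw
        by_cases hdy : ℓ (s i * y) < ℓ y
        · have h6 : bruhatLE cs (s i * y) (s i * w) := desc_desc cs hlt hdy hyw
          have h7 : s i * y ∈ parabolicSubgroup cs J := mul_mem hs hy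
          have h8 : bruhatLE cs (s i * y) m' := hm'max (s i * y) h7 h6
          exact le_of_mul_le cs hm2 h8
        · have hay : ℓ y < ℓ (s i * y) := by
            have := cs.length_simple_mul_ne y i
            omega
          have h6 : bruhatLE cs y (s i * w) := asc_desc cs hlt hay hyw
          exact hm'max y hy h6
    · -- s i ∉ W_J : the maximum is m'
      refine ⟨m', ⟨hm'mem, bruhat_trans cs hm'le hw'w⟩, ?_⟩
      intro y hy hyw
      have hay : ℓ y < ℓ (s i * y) := by
        by_contra hcon
        have hdy : ℓ (s i * y) < ℓ y := by
          have := cs.length_simple_mul_ne y i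
          omega
        exact hs (simple_mem_parabolic_of_descent cs hy hdy)
      have h6 : bruhatLE cs y (s i * w) := asc_desc cs hlt hay hyw
      exact hm'max y hy h6

end BruhatAux
end

/-- `{y ∈ W_J : y ≤ w}` has a unique maximal element `m(w,J)`. -/
theorem exists_unique_max_parabolic_below
    [Finite W] (cs : CoxeterSystem M W) (J : Set B) (w : W) :
    ∃! m : W, (m ∈ parabolicSubgroup cs J ∧ bruhatLE cs m w) ∧
      ∀ y ∈ parabolicSubgroup cs J, bruhatLE cs y w → bruhatLE cs y m := by
  obtain ⟨m, hm, hmax⟩ := BruhatAux.exists_max cs J w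
  refine ⟨m, ⟨hm, hmax⟩, ?_⟩
  rintro m₂ ⟨⟨hm₂mem, hm₂le⟩, hm₂max⟩
  exact BruhatAux.bruhat_antisymm cs (hmax m₂ hm₂mem hm₂le) (hm₂max m hm.1 hm.2)
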